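/- arXiv:1706.08039 — 3 statements merged into one kernel-verified Lean document; each statement's English description precedes it below -/
import Mathlib

section
/- For 0 < Re(μ) < Re(λ) and a > 0, the integral ∫₀^∞ x^(μ-1) (x + a + √(x² + 2ax))^(-λ) dx equals 2λ a^(-λ) (a/2)^μ Γ(2μ) Γ(λ-μ) / Γ(1+λ+μ). -/
open Complex MeasureTheory Real

-- helper: cpow of positive real as exp
lemma cpow_pos_real (x : ℝ) (hx : 0 < x) (c : ℂ) :
    (x:ℂ)^c = Complex.exp ((Real.log x : ℂ) * c) := by
  rw [Complex.cpow_def_of_ne_zero (by exact_mod_cast hx.ne'), Complex.ofReal_log hx.le]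

lemma ofReal_pos_eq_exp (x : ℝ) (hx : 0 < x) :
    (x:ℂ) = Complex.exp ((Real.log x : ℂ)) := by
  rw [Complex.ofReal_log hx.le, Complex.exp_log (by exact_mod_cast hx.ne')]

lemma key (μ lam : ℂ) (a v : ℝ) (ha : 0 < a) (hv0 : 0 < v) (hv1 : v < 1) :
    ((a*(1-v)^2/(2*v):ℝ):ℂ)^(μ-1) * ((a/v:ℝ):ℂ)^(-lam) * ((a*(1-v^2)/(2*v^2):ℝ):ℂ)
    = (((a/2:ℝ):ℂ)^μ * ((a:ℝ):ℂ)^(-lam)) *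
      ((v:ℂ)^(lam-μ-1) * ((1-v:ℝ):ℂ)^(2*μ-1) * ((1+v:ℝ):ℂ)) := by
  have h1v : 0 < 1 - v := by linarith
  have h1p : 0 < 1 + v := by linarith
  have hg : 0 < a*(1-v)^2/(2*v) := by positivity
  have hav : 0 < a/v := by positivity
  have hs : 0 < a*(1-v^2)/(2*v^2) := by
    have : 0 < 1 - v^2 := by nlinarith
    positivity
  have ha2 : 0 < a/2 := by linarith
  rw [cpow_pos_real _ hg, cpow_pos_real _ hav, cpow_pos_real _ ha2,
      cpow_pos_real _ ha, cpow_pos_real v hv0, cpow_pos_real _ h1v,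
      ofReal_pos_eq_exp _ hs, ofReal_pos_eq_exp _ h1p,
      ← Complex.exp_add, ← Complex.exp_add, ← Complex.exp_add, ← Complex.exp_add,
      ← Complex.exp_add, ← Complex.exp_add]
  congr 1
  have e1 : Real.log (a*(1-v)^2/(2*v))
      = Real.log a + 2*Real.log (1-v) - Real.log 2 - Real.log v := by
    rw [Real.log_div (by positivity) (by positivity), Real.log_mul ha.ne' (by positivity),
        Real.log_mul (by norm_num) hv0.ne', Real.log_pow]
    push_cast; ring
  have e2 : Real.log (a/v) = Real.log a - Real.log v :=
    Real.log_div ha.ne' hv0.ne'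
  have e3 : Real.log (a/2) = Real.log a - Real.log 2 :=
    Real.log_div ha.ne' (by norm_num)
  have e4 : Real.log (a*(1-v^2)/(2*v^2))
      = Real.log a + Real.log (1-v) + Real.log (1+v) - Real.log 2 - 2*Real.log v := by
    have h12 : (1:ℝ) - v^2 = (1-v)*(1+v) := by ring
    have h12pos : (0:ℝ) < 1 - v^2 := by nlinarith [mul_pos h1v h1p]
    rw [Real.log_div (mul_pos ha h12pos).ne' (by positivity), Real.log_mul ha.ne' h12pos.ne',
        h12, Real.log_mul h1v.ne' h1p.ne', Real.log_mul (by norm_num) (by positivity),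
        Real.log_pow]
    push_cast; ring
  rw [e1, e2, e3, e4]
  push_cast
  ring

theorem stmt2 (μ lam : ℂ) (hμ : 0 < μ.re) (h : μ.re < lam.re) (a : ℝ) (ha : 0 < a) :
    ∫ x in Set.Ioi (0:ℝ),
        (x : ℂ) ^ (μ - 1) * ((x + a + Real.sqrt (x ^ 2 + 2 * a * x) : ℝ) : ℂ) ^ (-lam) =
    2 * lam * (a : ℂ) ^ (-lam) * ((a / 2 : ℝ) : ℂ) ^ μ *
      Complex.Gamma (2 * μ) * Complex.Gamma (lam - μ) / Complex.Gamma (1 + lam + μ) := by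
  set g : ℝ → ℝ := fun v => a * (1-v)^2 / (2*v) with hgdef
  set g' : ℝ → ℝ := fun v => -(a * (1-v^2) / (2*v^2)) with hg'def
  have hderiv : ∀ v ∈ Set.Ioo (0:ℝ) 1, HasDerivWithinAt g (g' v) (Set.Ioo 0 1) v := by
    intro v hv
    obtain ⟨hv0, hv1⟩ := hv
    have h2v : (2:ℝ)*v ≠ 0 := by positivity
    have hd1 : HasDerivAt (fun t:ℝ => (1 - t)) (-1) v := by
      simpa using (hasDerivAt_id v).const_sub 1
    have hd2 : HasDerivAt (fun t:ℝ => a*(1-t)^2) (a*((2:ℕ)*(1-v)^1*(-1))) v :=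
      (hd1.pow 2).const_mul a
    have hd3 : HasDerivAt (fun t:ℝ => 2*t) 2 v := by
      simpa using (hasDerivAt_id v).const_mul 2
    have := hd2.div hd3 h2v
    have heq : (a*((2:ℕ)*(1-v)^1*(-1)) * (2*v) - a*(1-v)^2*2) / (2*v)^2 = g' v := by
      rw [hg'def]; field_simp; ring
    rw [heq] at this
    exact this.hasDerivWithinAt
  have hinj : Set.InjOn g (Set.Ioo 0 1) := by
    intro v1 hv1 v2 hv2 hgv
    obtain ⟨h10, h11⟩ := hv1; obtain ⟨h20, h21⟩ := hv2
    have h1 : a * (1-v1)^2 * v2 = a * (1-v2)^2 * v1 := by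
      have := hgv
      simp only [hgdef] at this
      field_simp at this
      linear_combination a * this
    have h2 : (v2 - v1) * (1 - v1*v2) = 0 := by
      have ha' : a ≠ 0 := ha.ne'
      have : a * ((v2 - v1) * (1 - v1*v2)) = 0 := by linear_combination h1
      have := mul_eq_zero.mp this
      tauto
    rcases mul_eq_zero.mp h2 with h3 | h3
    · linarith
    · nlinarith
  have himg : g '' (Set.Ioo 0 1) = Set.Ioi 0 := by
    ext x
    simp only [Set.mem_image, Set.mem_Ioi, Set.mem_Ioo]
    constructor
    · rintro ⟨v, ⟨hv0, hv1⟩, rfl⟩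
      have : 0 < 1 - v := by linarith
      rw [hgdef]
      exact div_pos (mul_pos ha (pow_pos this 2)) (by linarith)
    · intro hx
      set s := Real.sqrt (x^2 + 2*a*x) with hs
      have hs2 : s^2 = x^2 + 2*a*x := Real.sq_sqrt (by nlinarith)
      have hs0 : 0 ≤ s := Real.sqrt_nonneg _
      have hxs : x < s := by nlinarith
      have hsxa : s < x + a := by nlinarith
      refine ⟨(x + a - s)/a, ⟨div_pos (by linarith) ha, ?_⟩, ?_⟩
      · rw [div_lt_one ha]; linarith
      · rw [hgdef]
        have hne : x + a - s ≠ 0 := by linarith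
        field_simp
        nlinarith [hs2]
  rw [← himg, MeasureTheory.integral_image_eq_integral_abs_deriv_smul measurableSet_Ioo hderiv hinj]
  have hcong : ∀ v ∈ Set.Ioo (0:ℝ) 1,
      |g' v| • ((↑(g v) : ℂ) ^ (μ - 1) *
        ((g v + a + Real.sqrt ((g v) ^ 2 + 2 * a * (g v)) : ℝ) : ℂ) ^ (-lam))
      = (((a/2:ℝ):ℂ)^μ * ((a:ℝ):ℂ)^(-lam)) *
        ((v:ℂ)^(lam-μ-1) * ((1-v:ℝ):ℂ)^(2*μ-1) * ((1+v:ℝ):ℂ)) := by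
    intro v hv
    obtain ⟨hv0, hv1⟩ := hv
    have h1v : 0 < 1 - v := by linarith
    have h1p : 0 < 1 + v := by linarith
    have h12pos : (0:ℝ) < 1 - v^2 := by nlinarith [mul_pos h1v h1p]
    have habs : |g' v| = a * (1-v^2) / (2*v^2) := by
      rw [hg'def, abs_neg, abs_of_pos (by positivity)]
    have hsqrt : Real.sqrt ((g v)^2 + 2*a*(g v)) = a*(1-v^2)/(2*v) := by
      have harg : (g v)^2 + 2*a*(g v) = (a*(1-v^2)/(2*v))^2 := by
        rw [hgdef]; field_simp; ring
      rw [harg, Real.sqrt_sq (by positivity)]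
    have hsum : g v + a + a*(1-v^2)/(2*v) = a/v := by
      rw [hgdef]; field_simp; ring
    rw [habs, hsqrt, hsum]
    rw [Complex.real_smul, mul_comm]
    exact key μ lam a v ha hv0 hv1
  rw [MeasureTheory.setIntegral_congr_fun measurableSet_Ioo hcong]
  rw [MeasureTheory.integral_const_mul]
  -- beta integral part
  have hre1 : 0 < (lam - μ).re := by simp [Complex.sub_re]; linarith
  have hre2 : 0 < (lam - μ + 1).re := by simp [Complex.add_re, Complex.sub_re]; linarith
  have hre3 : 0 < (2*μ).re := by
    simp [Complex.mul_re]; linarith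
  have hre4 : 0 < (lam + μ).re := by simp [Complex.add_re]; linarith
  have hlmne : lam - μ ≠ 0 := fun h0 => by simp [h0] at hre1
  have hlpne : lam + μ ≠ 0 := fun h0 => by simp [h0] at hre4
  have hGne : Complex.Gamma (lam + μ) ≠ 0 := Complex.Gamma_ne_zero_of_re_pos hre4
  -- convergence
  have hconv1 := Complex.betaIntegral_convergent hre1 hre3
  have hconv2 := Complex.betaIntegral_convergent hre2 hre3
  have hint1 : IntegrableOn (fun x:ℝ => (x:ℂ) ^ (lam - μ - 1) * (1 - (x:ℂ)) ^ (2*μ - 1))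
      (Set.Ioo (0:ℝ) 1) := by
    have := (intervalIntegrable_iff_integrableOn_Ioc_of_le zero_le_one).mp hconv1
    exact this.mono_set Set.Ioo_subset_Ioc_self
  have hint2 : IntegrableOn (fun x:ℝ => (x:ℂ) ^ (lam - μ + 1 - 1) * (1 - (x:ℂ)) ^ (2*μ - 1))
      (Set.Ioo (0:ℝ) 1) := by
    have := (intervalIntegrable_iff_integrableOn_Ioc_of_le zero_le_one).mp hconv2
    exact this.mono_set Set.Ioo_subset_Ioc_self
  have hsplit : ∀ v ∈ Set.Ioo (0:ℝ) 1,
      (v:ℂ)^(lam-μ-1) * ((1-v:ℝ):ℂ)^(2*μ-1) * ((1+v:ℝ):ℂ)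
      = (v:ℂ) ^ (lam - μ - 1) * (1 - (v:ℂ)) ^ (2*μ - 1)
        + (v:ℂ) ^ (lam - μ + 1 - 1) * (1 - (v:ℂ)) ^ (2*μ - 1) := by
    intro v hv
    obtain ⟨hv0, hv1⟩ := hv
    have hvne : (v:ℂ) ≠ 0 := by exact_mod_cast hv0.ne'
    have hvpow : (v:ℂ)^(lam-μ-1) * (v:ℂ) = (v:ℂ)^(lam-μ+1-1) := by
      nth_rewrite 2 [← Complex.cpow_one (v:ℂ)]
      rw [← Complex.cpow_add _ _ hvne]
      ring_nf
    push_cast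
    rw [← hvpow]
    ring
  rw [MeasureTheory.setIntegral_congr_fun measurableSet_Ioo hsplit,
      MeasureTheory.integral_add hint1 hint2]
  have hIoo1 : ∫ v in Set.Ioo (0:ℝ) 1, (v:ℂ) ^ (lam - μ - 1) * (1 - (v:ℂ)) ^ (2*μ - 1)
      = Complex.betaIntegral (lam - μ) (2*μ) := by
    rw [Complex.betaIntegral, intervalIntegral.integral_of_le zero_le_one,
        MeasureTheory.integral_Ioc_eq_integral_Ioo]
  have hIoo2 : ∫ v in Set.Ioo (0:ℝ) 1, (v:ℂ) ^ (lam - μ + 1 - 1) * (1 - (v:ℂ)) ^ (2*μ - 1)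
      = Complex.betaIntegral (lam - μ + 1) (2*μ) := by
    rw [Complex.betaIntegral, intervalIntegral.integral_of_le zero_le_one,
        MeasureTheory.integral_Ioc_eq_integral_Ioo]
  rw [hIoo1, hIoo2]
  have hB1 : Complex.betaIntegral (lam - μ) (2*μ)
      = Complex.Gamma (lam - μ) * Complex.Gamma (2*μ) / Complex.Gamma (lam + μ) := by
    have := Complex.Gamma_mul_Gamma_eq_betaIntegral hre1 hre3
    rw [show lam - μ + 2*μ = lam + μ by ring] at this
    rw [eq_div_iff hGne]; linear_combination -this
  have hGne2 : Complex.Gamma (lam + μ + 1) ≠ 0 := by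
    apply Complex.Gamma_ne_zero_of_re_pos
    simp [Complex.add_re]; linarith
  have hG2 : Complex.Gamma (lam + μ + 1) = (lam + μ) * Complex.Gamma (lam + μ) :=
    Complex.Gamma_add_one _ hlpne
  have hB2 : Complex.betaIntegral (lam - μ + 1) (2*μ)
      = (lam - μ) * Complex.Gamma (lam - μ) * Complex.Gamma (2*μ)
        / ((lam + μ) * Complex.Gamma (lam + μ)) := by
    have h2 := Complex.Gamma_mul_Gamma_eq_betaIntegral hre2 hre3
    rw [show lam - μ + 1 + 2*μ = lam + μ + 1 by ring] at h2
    rw [Complex.Gamma_add_one _ hlmne, hG2] at h2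
    rw [eq_div_iff (mul_ne_zero hlpne hGne)]; linear_combination -h2
  rw [hB1, hB2, show (1:ℂ) + lam + μ = lam + μ + 1 by ring, hG2]
  field_simp
  ring
end

section
/- For α, β ∈ ℂ with Re(α) > 0 and Re(β) > 0, the integral ∫₀^1 x^(α-1) (1-x)^(2β-1) (1 - x/3)^(2α-1) (1 - x/4)^(β-1) dx equals (2/3)^(2α) Γ(α) Γ(β) / Γ(α+β). -/
open Complex MeasureTheory

private lemma cpowE {r : ℝ} (hr : 0 < r) (c : ℂ) :
    (r : ℂ) ^ c = Complex.exp (c * Real.log r) := by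
  rw [Complex.cpow_def_of_ne_zero (by exact_mod_cast hr.ne'),
    ← Complex.ofReal_log hr.le, mul_comm]

private lemma coeE {r : ℝ} (hr : 0 < r) : (r : ℂ) = Complex.exp (Real.log r) := by
  rw [← Complex.ofReal_exp, Real.exp_log hr]

theorem stmt3 (α β : ℂ) (hα : 0 < α.re) (hβ : 0 < β.re) :
    ∫ x in (0:ℝ)..1,
        (x : ℂ) ^ (α - 1) * ((1 - x : ℝ) : ℂ) ^ (2 * β - 1) *
        ((1 - x / 3 : ℝ) : ℂ) ^ (2 * α - 1) * ((1 - x / 4 : ℝ) : ℂ) ^ (β - 1) =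
    ((2 / 3 : ℝ) : ℂ) ^ (2 * α) * Complex.Gamma α * Complex.Gamma β / Complex.Gamma (α + β) := by
  set φ : ℝ → ℝ := fun x => x * (3 - x) ^ 2 / 4 with hφdef
  set d : ℝ → ℝ := fun x => 3 * (1 - x) * (3 - x) / 4 with hddef
  set g : ℝ → ℂ := fun u => (u : ℂ) ^ (α - 1) * (1 - (u : ℂ)) ^ (β - 1) with hgdef
  set F : ℝ → ℂ := fun x => (x : ℂ) ^ (α - 1) * ((1 - x : ℝ) : ℂ) ^ (2 * β - 1) *
      ((1 - x / 3 : ℝ) : ℂ) ^ (2 * α - 1) * ((1 - x / 4 : ℝ) : ℂ) ^ (β - 1) with hFdef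
  have hderiv : ∀ x : ℝ, HasDerivAt φ (d x) x := by
    intro x
    have h : HasDerivAt (fun y : ℝ => y * (3 - y) ^ 2)
        (1 * (3 - x) ^ 2 + x * ((2 : ℕ) * (3 - x) ^ (2 - 1) * (0 - 1))) x :=
      (hasDerivAt_id x).mul (((hasDerivAt_const x (3:ℝ)).sub (hasDerivAt_id x)).pow 2)
    have h2 := h.div_const 4
    convert h2 using 1
    show (3 * (1 - x) * (3 - x) / 4 : ℝ) = _; ring
    all_goals rfl
  have hcont : Continuous φ := by unfold φ; continuity
  have hsm : StrictMonoOn φ (Set.Icc 0 1) := by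
    apply strictMonoOn_of_deriv_pos (convex_Icc 0 1) hcont.continuousOn
    intro x hx
    rw [interior_Icc] at hx
    rw [(hderiv x).deriv]
    have h1 : (0:ℝ) < 1 - x := by linarith [hx.2]
    have h3 : (0:ℝ) < 3 - x := by linarith [hx.2]
    have := mul_pos (mul_pos (by norm_num : (0:ℝ) < 3) h1) h3
    unfold d
    linarith
  have hinj : Set.InjOn φ (Set.Ioo 0 1) := hsm.injOn.mono Set.Ioo_subset_Icc_self
  have himg : Set.Ioo (0:ℝ) 1 = φ '' Set.Ioo 0 1 := by
    apply Set.Subset.antisymm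
    · have h := intermediate_value_Ioo (zero_le_one) hcont.continuousOn
      have h0 : φ 0 = 0 := by simp [hφdef]
      have h1 : φ 1 = 1 := by norm_num [hφdef]
      rwa [h0, h1] at h
    · rintro _ ⟨x, ⟨hx0, hx1⟩, rfl⟩
      simp only [hφdef, Set.mem_Ioo]
      constructor
      · exact div_pos (mul_pos hx0 (by nlinarith)) (by norm_num)
      · nlinarith [mul_pos (mul_pos (sub_pos.mpr hx1) (sub_pos.mpr hx1))
          (show (0:ℝ) < 4 - x by linarith)]
  have hder : ∀ x ∈ Set.Ioo (0:ℝ) 1, HasDerivWithinAt φ (d x) (Set.Ioo 0 1) x :=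
    fun x _ => (hderiv x).hasDerivWithinAt
  -- the change-of-variables computation
  have key : Complex.betaIntegral α β = ((9/4 : ℝ) : ℂ) ^ α * ∫ x in (0:ℝ)..1, F x := by
    rw [Complex.betaIntegral, intervalIntegral.integral_of_le zero_le_one,
      MeasureTheory.integral_Ioc_eq_integral_Ioo]
    have : (∫ u in Set.Ioo (0:ℝ) 1, (u : ℂ) ^ (α - 1) * (1 - (u:ℂ)) ^ (β - 1))
        = ∫ u in φ '' Set.Ioo (0:ℝ) 1, g u := by rw [← himg]
    rw [this, MeasureTheory.integral_image_eq_integral_abs_deriv_smul measurableSet_Ioo hder hinj g]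
    rw [show (∫ x in (0:ℝ)..1, F x) = ∫ x in Set.Ioo (0:ℝ) 1, F x by
      rw [intervalIntegral.integral_of_le zero_le_one, MeasureTheory.integral_Ioc_eq_integral_Ioo]]
    rw [← MeasureTheory.integral_const_mul]
    apply MeasureTheory.setIntegral_congr_fun measurableSet_Ioo
    intro x hx
    obtain ⟨hx0, hx1⟩ := hx
    have h1 : (0:ℝ) < 1 - x := by linarith
    have h3 : (0:ℝ) < 1 - x/3 := by linarith
    have h4 : (0:ℝ) < 1 - x/4 := by linarith
    have hdpos : 0 < d x := by unfold d; nlinarith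
    have hφpos : 0 < φ x := by
      show (0:ℝ) < x * (3 - x) ^ 2 / 4
      exact div_pos (mul_pos hx0 (by nlinarith)) (by norm_num)
    have hφlt : φ x < 1 := by
      show x * (3 - x) ^ 2 / 4 < 1
      nlinarith [mul_pos (mul_pos (sub_pos.mpr hx1) (sub_pos.mpr hx1))
        (show (0:ℝ) < 4 - x by linarith)]
    have h1φ : 0 < 1 - φ x := by linarith
    have hc : (1 : ℂ) - ((φ x : ℝ) : ℂ) = ((1 - φ x : ℝ) : ℂ) := by push_cast; ring
    simp only [hgdef, hFdef]
    rw [abs_of_pos hdpos, Complex.real_smul, hc]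
    rw [coeE hdpos, cpowE hφpos (α - 1), cpowE h1φ (β - 1),
      cpowE (by norm_num : (0:ℝ) < 9/4) α, cpowE hx0 (α - 1), cpowE h1 (2*β - 1),
      cpowE h3 (2*α - 1), cpowE h4 (β - 1),
      ← Complex.exp_add, ← Complex.exp_add, ← Complex.exp_add, ← Complex.exp_add,
      ← Complex.exp_add, ← Complex.exp_add]
    congr 1
    have l1 : Real.log (φ x) = Real.log (9/4) + Real.log x + 2 * Real.log (1 - x/3) := by
      have e : φ x = (9/4) * (x * (1 - x/3)^2) := by unfold φ; ring
      rw [e, Real.log_mul (by norm_num) (by positivity),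
        Real.log_mul hx0.ne' (by positivity), Real.log_pow]
      push_cast; ring
    have l2 : Real.log (1 - φ x) = 2 * Real.log (1 - x) + Real.log (1 - x/4) := by
      have e : 1 - φ x = (1 - x/4) * (1 - x)^2 := by unfold φ; ring
      rw [e, Real.log_mul h4.ne' (by positivity), Real.log_pow]
      push_cast; ring
    have l3 : Real.log (d x) = Real.log (9/4) + Real.log (1 - x) + Real.log (1 - x/3) := by
      have e : d x = (9/4) * ((1 - x) * (1 - x/3)) := by unfold d; ring
      rw [e, Real.log_mul (by norm_num) (by positivity), Real.log_mul h1.ne' h3.ne']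
      push_cast; ring
    rw [l1, l2, l3]
    push_cast
    ring
  -- finish
  have hne : Complex.Gamma (α + β) ≠ 0 :=
    Complex.Gamma_ne_zero_of_re_pos (by rw [Complex.add_re]; linarith)
  have hfrac : Complex.Gamma α * Complex.Gamma β / Complex.Gamma (α + β)
      = Complex.betaIntegral α β := by
    rw [Complex.Gamma_mul_Gamma_eq_betaIntegral hα hβ, mul_div_cancel_left₀ _ hne]
  have hone : ((2/3 : ℝ) : ℂ) ^ (2 * α) * ((9/4 : ℝ) : ℂ) ^ α = 1 := by
    have e1 : ((2/3 : ℝ) : ℂ) ^ (2 * α) = ((4/9 : ℝ) : ℂ) ^ α := by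
      rw [two_mul, Complex.cpow_add _ _ (by norm_num : ((2/3 : ℝ) : ℂ) ≠ 0),
        ← Complex.mul_cpow_ofReal_nonneg (show (0:ℝ) ≤ 2/3 by norm_num)
          (show (0:ℝ) ≤ 2/3 by norm_num) α]
      norm_num
    rw [e1, ← Complex.mul_cpow_ofReal_nonneg (show (0:ℝ) ≤ 4/9 by norm_num)
        (show (0:ℝ) ≤ 9/4 by norm_num) α]
    norm_num
  rw [mul_assoc, mul_div_assoc, hfrac, key, ← mul_assoc, hone, one_mul]
end

section
/- The generalized multiindex Bessel function J(z) = Σ_{n=0}^∞ c^n (γ)_{κn} z^n / (∏_{j=1}^m Γ(α_j n + β_j + (b+1)/2) · n!) converges absolutely for every z ∈ ℂ, provided Σ_{j=1}^m Re(α_j) > max{0, κ-1}, κ > 0, Re(β_j) > 0 and Re(γ) > 0. -/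
open Complex MeasureTheory Set Real Filter

lemma L1 (z : ℂ) (hz : 0 < z.re) : ‖Complex.Gamma z‖ ≤ Real.Gamma z.re := by
  rw [Complex.Gamma_eq_integral hz, Real.Gamma_eq_integral hz, Complex.GammaIntegral]
  calc ‖∫ x in Ioi (0:ℝ), (-x).exp • (x:ℂ) ^ (z-1)‖
      ≤ ∫ x in Ioi (0:ℝ), ‖(-x).exp • (x:ℂ) ^ (z-1)‖ := norm_integral_le_integral_norm _
    _ = ∫ x in Ioi (0:ℝ), Real.exp (-x) * x ^ (z.re - 1) := by
        refine setIntegral_congr_fun measurableSet_Ioi (fun x hx => ?_)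
        rw [norm_smul, Complex.norm_cpow_eq_rpow_re_of_pos hx]
        simp [Real.norm_eq_abs, Real.abs_exp, Complex.sub_re]

-- Gamma ≤ 1 on [1,2]

lemma G2 {t : ℝ} (h1 : 1 ≤ t) (h2 : t ≤ 2) : Real.Gamma t ≤ 1 := by
  have := Real.convexOn_Gamma.2 (show (1:ℝ) ∈ Ioi 0 by norm_num)
    (show (2:ℝ) ∈ Ioi 0 by norm_num) (show (0:ℝ) ≤ 2 - t by linarith)
    (show (0:ℝ) ≤ t - 1 by linarith) (by ring)
  simp only [smul_eq_mul, Real.Gamma_one, Real.Gamma_two] at this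
  have he : (2 - t) * 1 + (t - 1) * 2 = t := by ring
  rw [he] at this
  linarith

-- Gamma ≥ 1 on [2,3]

lemma G1 {t : ℝ} (h1 : 2 ≤ t) (h2 : t ≤ 3) : 1 ≤ Real.Gamma t := by
  have hpos : 0 < Real.Gamma t := Real.Gamma_pos_of_pos (by linarith)
  have hpos' : 0 < Real.Gamma (4 - t) := Real.Gamma_pos_of_pos (by linarith)
  have hc := Real.convexOn_log_Gamma.2 (show t ∈ Ioi (0:ℝ) by simp; linarith)
    (show (4 - t) ∈ Ioi (0:ℝ) by simp; linarith)
    (show (0:ℝ) ≤ 1/2 by norm_num) (show (0:ℝ) ≤ 1/2 by norm_num) (by norm_num)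
  have he : (1/2 : ℝ) • t + (1/2 : ℝ) • (4 - t) = 2 := by
    simp only [smul_eq_mul]; ring
  rw [he] at hc
  simp only [Function.comp_apply, Real.Gamma_two, Real.log_one, smul_eq_mul] at hc
  have h4 : Real.Gamma (4 - t) ≤ 1 := G2 (by linarith) (by linarith)
  have hlog : Real.log (Real.Gamma (4-t)) ≤ 0 := Real.log_nonpos hpos'.le h4
  have h0 : 0 ≤ Real.log (Real.Gamma t) := by linarith
  calc (1:ℝ) = Real.exp 0 := by simp
    _ ≤ Real.exp (Real.log (Real.Gamma t)) := Real.exp_le_exp.2 h0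
    _ = Real.Gamma t := Real.exp_log hpos

lemma gammaUB {u s : ℝ} (hu : 0 < u) (hs : 0 ≤ s) :
    Real.Gamma (u + s) ≤ Real.Gamma u * (u + s) ^ s := by
  rcases eq_or_lt_of_le hs with rfl | hs'
  · simp
  have hus : 0 < u + s := by linarith
  have key := Real.convexOn_log_Gamma.slope_mono_adjacent
    (show u ∈ Ioi (0:ℝ) by simpa using hu)
    (show u + s + 1 ∈ Ioi (0:ℝ) by simp; linarith)
    (show u < u + s by linarith) (show u + s < u + s + 1 by linarith)
  have hrec : Real.Gamma (u + s + 1) = (u + s) * Real.Gamma (u + s) :=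
    Real.Gamma_add_one hus.ne'
  have hgpos : 0 < Real.Gamma (u + s) := Real.Gamma_pos_of_pos hus
  have hgpos' : 0 < Real.Gamma u := Real.Gamma_pos_of_pos hu
  simp only [Function.comp_apply] at key
  rw [hrec, Real.log_mul hus.ne' hgpos.ne',
    show u + s - u = s by ring, show u + s + 1 - (u + s) = 1 by ring, div_one] at key
  rw [div_le_iff₀ hs'] at key
  have key3 : Real.log (Real.Gamma (u+s)) ≤ Real.log (Real.Gamma u) + s * Real.log (u+s) := by
    nlinarith [key]
  calc Real.Gamma (u+s) = Real.exp (Real.log (Real.Gamma (u+s))) := (Real.exp_log hgpos).symm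
    _ ≤ Real.exp (Real.log (Real.Gamma u) + s * Real.log (u+s)) := Real.exp_le_exp.2 key3
    _ = Real.Gamma u * (u+s) ^ s := by
        rw [Real.exp_add, Real.exp_log hgpos', Real.rpow_def_of_pos hus, mul_comm s]

lemma gammaLB {u s : ℝ} (hu : 1 < u) (hs : 0 ≤ s) :
    Real.Gamma u * (u - 1) ^ s ≤ Real.Gamma (u + s) := by
  rcases eq_or_lt_of_le hs with rfl | hs'
  · simp
  have hu0 : 0 < u := by linarith
  have hu1 : 0 < u - 1 := by linarith
  have hus : 0 < u + s := by linarith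
  have key := Real.convexOn_log_Gamma.slope_mono_adjacent
    (show u - 1 ∈ Ioi (0:ℝ) by simpa using hu1)
    (show u + s ∈ Ioi (0:ℝ) by simpa using hus)
    (show u - 1 < u by linarith) (show u < u + s by linarith)
  have hg1 : 0 < Real.Gamma (u - 1) := Real.Gamma_pos_of_pos hu1
  have hgpos : 0 < Real.Gamma u := Real.Gamma_pos_of_pos hu0
  have hgpos' : 0 < Real.Gamma (u + s) := Real.Gamma_pos_of_pos hus
  have hrec : Real.log (Real.Gamma u) = Real.log (u - 1) + Real.log (Real.Gamma (u - 1)) := by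
    have h := Real.Gamma_add_one hu1.ne'
    rw [sub_add_cancel] at h
    rw [h, Real.log_mul hu1.ne' hg1.ne']
  simp only [Function.comp_apply] at key
  rw [show u - (u-1) = 1 by ring, div_one, show u + s - u = s by ring] at key
  rw [le_div_iff₀ hs'] at key
  have key3 : Real.log (Real.Gamma u) + s * Real.log (u - 1) ≤ Real.log (Real.Gamma (u+s)) := by
    nlinarith [key, hrec]
  calc Real.Gamma u * (u-1) ^ s
      = Real.exp (Real.log (Real.Gamma u) + s * Real.log (u-1)) := by
        rw [Real.exp_add, Real.exp_log hgpos, Real.rpow_def_of_pos hu1, mul_comm s]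
    _ ≤ Real.exp (Real.log (Real.Gamma (u+s))) := Real.exp_le_exp.2 key3
    _ = Real.Gamma (u+s) := Real.exp_log hgpos'

lemma sinh_le_mul_exp {t : ℝ} (ht : 0 ≤ t) : Real.sinh t ≤ t * Real.exp t := by
  rw [Real.sinh_eq]
  have h1 : 1 - Real.exp (-2*t) ≤ 2*t := by
    have := Real.add_one_le_exp (-2*t)
    linarith
  have h2 : Real.exp t - Real.exp (-t) = Real.exp t * (1 - Real.exp (-2*t)) := by
    rw [mul_sub, mul_one, ← Real.exp_add]; ring_nf
  rw [h2]
  have := Real.exp_pos t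
  calc Real.exp t * (1 - Real.exp (-2*t)) / 2 ≤ Real.exp t * (2*t) / 2 := by
        apply div_le_div_of_nonneg_right ?_ (by norm_num)
        exact mul_le_mul_of_nonneg_left h1 this.le
    _ = t * Real.exp t := by ring

lemma cosh_le_exp_abs (t : ℝ) : Real.cosh t ≤ Real.exp |t| := by
  rw [← Real.cosh_abs, ← Real.cosh_add_sinh |t|]
  have : 0 ≤ Real.sinh |t| := by rw [← Real.sinh_zero]; exact Real.sinh_le_sinh.2 (abs_nonneg t)
  linarith

lemma abs_sinh_le (t : ℝ) : |Real.sinh t| ≤ |t| * Real.exp |t| := by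
  rw [Real.abs_sinh]; exact sinh_le_mul_exp (abs_nonneg t)

lemma norm_sin_le (z : ℂ) : ‖Complex.sin z‖ ≤ (|Real.sin z.re| + |z.im|) * Real.exp |z.im| := by
  rw [Complex.sin_eq]
  calc ‖(Complex.sin z.re) * Complex.cosh z.im + Complex.cos z.re * Complex.sinh z.im * I‖
      ≤ ‖(Complex.sin z.re) * Complex.cosh z.im‖ + ‖Complex.cos z.re * Complex.sinh z.im * I‖ :=
        norm_add_le _ _
    _ = |Real.sin z.re| * |Real.cosh z.im| + |Real.cos z.re| * |Real.sinh z.im| := by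
        simp [Complex.ofReal_sin, Complex.ofReal_cos, Complex.ofReal_cosh, Complex.ofReal_sinh,
          ← Complex.ofReal_sin, ← Complex.ofReal_cos, ← Complex.ofReal_cosh, ← Complex.ofReal_sinh,
          Complex.norm_real, Real.norm_eq_abs]
    _ ≤ |Real.sin z.re| * Real.exp |z.im| + 1 * (|z.im| * Real.exp |z.im|) := by
        gcongr
        · rw [_root_.abs_of_nonneg (Real.cosh_pos _).le]; exact cosh_le_exp_abs _
        · exact Real.abs_cos_le_one _
        · exact abs_sinh_le _
    _ = (|Real.sin z.re| + |z.im|) * Real.exp |z.im| := by ring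

lemma norm_sin_le' (z : ℂ) : ‖Complex.sin z‖ ≤ Real.exp |z.im| := by
  rw [Complex.sin_eq]
  calc ‖(Complex.sin z.re) * Complex.cosh z.im + Complex.cos z.re * Complex.sinh z.im * I‖
      ≤ ‖(Complex.sin z.re) * Complex.cosh z.im‖ + ‖Complex.cos z.re * Complex.sinh z.im * I‖ :=
        norm_add_le _ _
    _ = |Real.sin z.re| * |Real.cosh z.im| + |Real.cos z.re| * |Real.sinh z.im| := by
        simp [← Complex.ofReal_sin, ← Complex.ofReal_cos, ← Complex.ofReal_cosh,
          ← Complex.ofReal_sinh, Complex.norm_real, Real.norm_eq_abs]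
    _ ≤ 1 * Real.cosh |z.im| + 1 * Real.sinh |z.im| := by
        gcongr
        · exact Real.abs_sin_le_one _
        · rw [_root_.abs_of_nonneg (Real.cosh_pos _).le, Real.cosh_abs]
        · exact Real.abs_cos_le_one _
        · rw [Real.abs_sinh]
    _ = Real.exp |z.im| := by rw [one_mul, one_mul, Real.cosh_add_sinh]

-- strip bound

lemma L2 (z : ℂ) (h1 : 1 ≤ z.re) (h2 : z.re ≤ 2) :
    Real.exp (-π * |z.im|) / 4 ≤ ‖Complex.Gamma z‖ := by
  have hexp_le_one : Real.exp (-π * |z.im|) ≤ 1 := by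
    apply Real.exp_le_one_iff.2
    have := abs_nonneg z.im
    nlinarith [Real.pi_pos]
  by_cases hsin : Complex.sin (π * z) = 0
  · -- z is an integer, so z = 1 or z = 2, Gamma z = 1
    obtain ⟨k, hk⟩ := Complex.sin_eq_zero_iff.1 hsin
    have hpi : (π:ℂ) ≠ 0 := Complex.ofReal_ne_zero.2 Real.pi_ne_zero
    have hz : z = (k:ℂ) := by
      apply mul_left_cancel₀ hpi
      rw [hk]; ring
    have hre : z.re = (k:ℝ) := by rw [hz]; simp
    have him : z.im = 0 := by rw [hz]; simp
    have hk1 : (1:ℤ) ≤ k := by exact_mod_cast hre ▸ h1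
    have hk2 : k ≤ (2:ℤ) := by exact_mod_cast hre ▸ h2
    have hG : Complex.Gamma z = 1 := by
      interval_cases k
      · rw [hz]; push_cast; exact Complex.Gamma_one
      · rw [hz]; push_cast
        simpa using Complex.Gamma_nat_eq_factorial 1
    rw [hG, norm_one]
    linarith
  · have hz1 : (1:ℂ) - z ≠ 0 := by
      intro h
      apply hsin
      have : z = 1 := by linear_combination -h
      rw [this, mul_one]
      simpa using Complex.sin_pi
    have hz2 : (2:ℂ) - z ≠ 0 := by
      intro h
      apply hsin
      have : z = 2 := by linear_combination -h
      rw [this]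
      have h22 : (π:ℂ) * 2 = 2 * π := by ring
      rw [h22, Complex.sin_two_pi]
    have hG2 : Complex.Gamma (2 - z) = (1 - z) * Complex.Gamma (1 - z) := by
      have := Complex.Gamma_add_one (1 - z) hz1
      rw [show (1:ℂ) - z + 1 = 2 - z by ring] at this
      exact this
    have hG3 : Complex.Gamma (3 - z) = (2 - z) * ((1 - z) * Complex.Gamma (1 - z)) := by
      have := Complex.Gamma_add_one (2 - z) hz2
      rw [show (2:ℂ) - z + 1 = 3 - z by ring] at this
      rw [this, hG2]
    have hrefl := Complex.Gamma_mul_Gamma_one_sub z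
    have hid : Complex.Gamma z * Complex.Gamma (3 - z) * Complex.sin (π * z)
        = π * ((2 - z) * (1 - z)) := by
      rw [hG3]
      have hrefl' : Complex.Gamma z * Complex.Gamma (1 - z) * Complex.sin (π * z) = π := by
        rw [hrefl, div_mul_cancel₀ _ hsin]
      linear_combination (2 - z) * (1 - z) * hrefl'
    have hnorm : ‖Complex.Gamma z‖ * (‖Complex.Gamma (3 - z)‖ * ‖Complex.sin (π * z)‖)
        = π * (‖(2:ℂ) - z‖ * ‖(1:ℂ) - z‖) := by
      have hh := congrArg norm hid
      simpa [norm_mul, Complex.norm_real, _root_.abs_of_nonneg Real.pi_pos.le,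
        Real.norm_eq_abs, mul_assoc] using hh
    set y := |z.im| with hy
    have hy0 : 0 ≤ y := abs_nonneg _
    set d := min (z.re - 1) (2 - z.re) with hd
    have hd0 : 0 ≤ d := le_min (by linarith) (by linarith)
    -- bound on |sin π z|
    have hre' : ((π * z : ℂ)).re = π * z.re := by simp
    have him' : ((π * z : ℂ)).im = π * z.im := by simp
    have habs_im : |(π * z : ℂ).im| = π * y := by
      rw [him', abs_mul, _root_.abs_of_nonneg Real.pi_pos.le]
    have hsin_s : |Real.sin (π * z.re)| ≤ π * d := by
      have hle1 : |Real.sin (π * z.re)| ≤ π * (z.re - 1) := by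
        have hh : Real.sin (π * z.re) = - Real.sin (π * (z.re - 1)) := by
          rw [show π * z.re = π * (z.re - 1) + π by ring, Real.sin_add_pi]
        rw [hh, abs_neg]
        calc |Real.sin (π * (z.re - 1))| ≤ |π * (z.re - 1)| := Real.abs_sin_le_abs
          _ = π * (z.re - 1) := by
              rw [abs_mul, _root_.abs_of_nonneg Real.pi_pos.le,
                _root_.abs_of_nonneg (by linarith)]
      have hle2 : |Real.sin (π * z.re)| ≤ π * (2 - z.re) := by
        have hh : Real.sin (π * (2 - z.re)) = - Real.sin (π * z.re) := by
          rw [show π * (2 - z.re) = -(π * z.re) + 2*π by ring, Real.sin_add_two_pi,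
            Real.sin_neg]
        have : |Real.sin (π * z.re)| = |Real.sin (π * (2 - z.re))| := by rw [hh, abs_neg]
        rw [this]
        calc |Real.sin (π * (2 - z.re))| ≤ |π * (2 - z.re)| := Real.abs_sin_le_abs
          _ = π * (2 - z.re) := by
              rw [abs_mul, _root_.abs_of_nonneg Real.pi_pos.le,
                _root_.abs_of_nonneg (by linarith)]
      rcases le_total (z.re - 1) (2 - z.re) with h | h
      · rw [hd, min_eq_left h]; exact hle1
      · rw [hd, min_eq_right h]; exact hle2
    have hsin_bound : ‖Complex.sin (π * z)‖ ≤ π * (d + y) * Real.exp (π * y) := by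
      calc ‖Complex.sin (π * z)‖
          ≤ (|Real.sin (π * z).re| + |(π * z).im|) * Real.exp |(π * z).im| := norm_sin_le _
        _ ≤ (π * d + π * y) * Real.exp (π * y) := by
            rw [habs_im, hre']
            gcongr
        _ = π * (d + y) * Real.exp (π * y) := by ring
    -- lower bound on the product |2-z||1-z|
    have h1z_re : ((1:ℂ) - z).re = 1 - z.re := by simp
    have h1z_im : ((1:ℂ) - z).im = -z.im := by simp
    have h2z_re : ((2:ℂ) - z).re = 2 - z.re := by simp
    have h2z_im : ((2:ℂ) - z).im = -z.im := by simp
    have habs1y : y ≤ ‖(1:ℂ) - z‖ := by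
      calc y = |((1:ℂ) - z).im| := by rw [h1z_im, abs_neg]
        _ ≤ ‖(1:ℂ) - z‖ := Complex.abs_im_le_norm _
    have habs2y : y ≤ ‖(2:ℂ) - z‖ := by
      calc y = |((2:ℂ) - z).im| := by rw [h2z_im, abs_neg]
        _ ≤ ‖(2:ℂ) - z‖ := Complex.abs_im_le_norm _
    have habs1r : z.re - 1 ≤ ‖(1:ℂ) - z‖ := by
      calc z.re - 1 ≤ |((1:ℂ) - z).re| := by rw [h1z_re]; rw [abs_sub_comm 1 z.re] at *; exact le_abs_self _
        _ ≤ ‖(1:ℂ) - z‖ := Complex.abs_re_le_norm _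
    have habs2r : 2 - z.re ≤ ‖(2:ℂ) - z‖ := by
      calc 2 - z.re ≤ |((2:ℂ) - z).re| := by rw [h2z_re]; exact le_abs_self _
        _ ≤ ‖(2:ℂ) - z‖ := Complex.abs_re_le_norm _
    have hprod : (d + y) / 4 ≤ ‖(2:ℂ) - z‖ * ‖(1:ℂ) - z‖ := by
      rcases le_total (z.re - 1) (2 - z.re) with h | h
      · have hdm : d = z.re - 1 := min_eq_left h
        have hA : (d + y) / 2 ≤ ‖(1:ℂ) - z‖ := by
          rw [hdm]
          have := habs1r
          have := habs1y
          linarith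
        have hB : (1:ℝ)/2 ≤ ‖(2:ℂ) - z‖ := le_trans (by linarith) habs2r
        calc (d + y)/4 = ((1:ℝ)/2) * ((d + y)/2) := by ring
          _ ≤ ‖(2:ℂ) - z‖ * ‖(1:ℂ) - z‖ := by
              apply mul_le_mul hB hA (by positivity) (norm_nonneg _)
      · have hdm : d = 2 - z.re := min_eq_right h
        have hA : (d + y) / 2 ≤ ‖(2:ℂ) - z‖ := by
          rw [hdm]
          linarith
        have hB : (1:ℝ)/2 ≤ ‖(1:ℂ) - z‖ := le_trans (by linarith) habs1r
        calc (d + y)/4 = ((d + y)/2) * ((1:ℝ)/2) := by ring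
          _ ≤ ‖(2:ℂ) - z‖ * ‖(1:ℂ) - z‖ := by
              apply mul_le_mul hA hB (by positivity) (norm_nonneg _)
    -- |Gamma(3-z)| ≤ 1
    have hG3re : ((3:ℂ) - z).re = 3 - z.re := by simp
    have hG3bound : ‖Complex.Gamma (3 - z)‖ ≤ 1 := by
      calc ‖Complex.Gamma (3 - z)‖ ≤ Real.Gamma ((3:ℂ) - z).re := L1 _ (by rw [hG3re]; linarith)
        _ ≤ 1 := by rw [hG3re]; exact G2 (by linarith) (by linarith)
    -- conclude
    have hsinpos : 0 < ‖Complex.sin (π * z)‖ := norm_pos_iff.2 hsin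
    have hG3pos : 0 < ‖Complex.Gamma (3 - z)‖ :=
      norm_pos_iff.2 (Complex.Gamma_ne_zero_of_re_pos (by rw [hG3re]; linarith))
    have hdy : 0 < d + y := by
      rcases (lt_or_eq_of_le (by positivity : (0:ℝ) ≤ d + y)) with h | h
      · exact h
      · exfalso
        have hd' : d = 0 := by linarith [abs_nonneg z.im]
        have hy' : y = 0 := by linarith
        rw [hd', hy'] at hsin_bound
        simp at hsin_bound
        exact hsin hsin_bound
    -- exp(-πy)/4 * (G3 * S) ≤ exp(-πy)/4 * (1 * π(d+y)e^{πy}) = π(d+y)/4 ≤ π * prod = |Γz| G3 S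
    have key : Real.exp (-π * y) / 4 * (‖Complex.Gamma (3 - z)‖ * ‖Complex.sin (π * z)‖)
        ≤ ‖Complex.Gamma z‖ * (‖Complex.Gamma (3 - z)‖ * ‖Complex.sin (π * z)‖) := by
      rw [hnorm]
      calc Real.exp (-π * y) / 4 * (‖Complex.Gamma (3 - z)‖ * ‖Complex.sin (π * z)‖)
          ≤ Real.exp (-π * y) / 4 * (1 * (π * (d + y) * Real.exp (π * y))) := by
            apply mul_le_mul_of_nonneg_left _ (by positivity)
            exact mul_le_mul hG3bound hsin_bound hsinpos.le one_pos.le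
        _ = π * ((d + y)/4) * (Real.exp (-π * y) * Real.exp (π * y)) := by ring
        _ = π * ((d + y)/4) := by
            rw [← Real.exp_add]
            simp
        _ ≤ π * (‖(2:ℂ) - z‖ * ‖(1:ℂ) - z‖) := by
            apply mul_le_mul_of_nonneg_left hprod Real.pi_pos.le
    exact le_of_mul_le_mul_right key (by positivity)

lemma L3aux : ∀ n : ℕ, ∀ z : ℂ, 1 ≤ z.re → z.re ≤ n + 2 →
    Real.exp (-π * |z.im|) / 4 * Real.Gamma z.re ≤ ‖Complex.Gamma z‖ := by
  intro n
  induction n with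
  | zero =>
    intro z h1 h2
    push_cast at h2
    have := L2 z h1 (by linarith)
    have hg : Real.Gamma z.re ≤ 1 := G2 h1 (by linarith)
    have hpos : (0:ℝ) < Real.exp (-π * |z.im|) / 4 := by positivity
    nlinarith [Real.Gamma_pos_of_pos (show (0:ℝ) < z.re by linarith)]
  | succ n ih =>
    intro z h1 h2
    by_cases hle : z.re ≤ n + 2
    · exact ih z h1 hle
    push_neg at hle
    -- z.re > n+2 ≥ 2, use recursion
    have h2' : (2:ℝ) ≤ z.re := by
      have : (2:ℝ) ≤ (n:ℝ) + 2 := by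
        have : (0:ℝ) ≤ (n:ℝ) := Nat.cast_nonneg n
        linarith
      linarith
    have hz1 : (z - 1).re = z.re - 1 := by simp
    have hz1i : (z - 1).im = z.im := by simp
    have hne : z - 1 ≠ 0 := by
      intro h
      have := congrArg Complex.re h
      rw [hz1] at this
      simp at this
      linarith
    have hrec : Complex.Gamma z = (z - 1) * Complex.Gamma (z - 1) := by
      have := Complex.Gamma_add_one (z - 1) hne
      rw [sub_add_cancel] at this
      exact this
    have hih := ih (z - 1) (by rw [hz1]; linarith) (by rw [hz1]; push_cast at h2 ⊢; linarith)
    have hre_le : z.re - 1 ≤ ‖z - 1‖ := by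
      calc z.re - 1 ≤ |(z-1).re| := by rw [hz1]; exact le_abs_self _
        _ ≤ ‖z - 1‖ := Complex.abs_re_le_norm _
    have hGrec : Real.Gamma z.re = (z.re - 1) * Real.Gamma (z.re - 1) := by
      have := Real.Gamma_add_one (show z.re - 1 ≠ 0 by intro h; apply absurd h; intro h'; nlinarith [h'])
      rw [sub_add_cancel] at this
      exact this
    rw [hrec, norm_mul, hGrec]
    have hgpos : 0 < Real.Gamma (z.re - 1) := Real.Gamma_pos_of_pos (by linarith)
    have hepos : (0:ℝ) < Real.exp (-π * |z.im|) / 4 := by positivity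
    calc Real.exp (-π * |z.im|) / 4 * ((z.re - 1) * Real.Gamma (z.re - 1))
        = (z.re - 1) * (Real.exp (-π * |z.im|) / 4 * Real.Gamma (z.re - 1)) := by ring
      _ ≤ ‖z - 1‖ * ‖Complex.Gamma (z - 1)‖ := by
          apply mul_le_mul hre_le ?_ (by positivity) (norm_nonneg _)
          rw [← hz1i] at *
          rw [← hz1]
          rw [hz1i]
          exact hih

lemma L3 (z : ℂ) (h1 : 1 ≤ z.re) :
    Real.exp (-π * |z.im|) / 4 * Real.Gamma z.re ≤ ‖Complex.Gamma z‖ := by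
  apply L3aux ⌊z.re⌋₊ z h1
  have := Nat.lt_floor_add_one z.re
  push_cast
  linarith

lemma L4 (z : ℂ) (h : z.re ≤ 0) (hG : Complex.Gamma z ≠ 0) :
    π * Real.exp (-π * |z.im|) / Real.Gamma (1 - z.re) ≤ ‖Complex.Gamma z‖ := by
  have hsin : Complex.sin (π * z) ≠ 0 := by
    intro hs
    obtain ⟨k, hk⟩ := Complex.sin_eq_zero_iff.1 hs
    have hpi : (π:ℂ) ≠ 0 := Complex.ofReal_ne_zero.2 Real.pi_ne_zero
    have hz : z = (k:ℂ) := by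
      apply mul_left_cancel₀ hpi
      rw [hk]; ring
    have hre : z.re = (k:ℝ) := by rw [hz]; simp
    have hk0 : k ≤ 0 := by exact_mod_cast hre ▸ h
    apply hG
    rw [Complex.Gamma_eq_zero_iff]
    refine ⟨(-k).toNat, ?_⟩
    rw [hz]
    have : ((-k).toNat : ℤ) = -k := Int.toNat_of_nonneg (by linarith)
    have h2 : ((-k).toNat : ℂ) = ((-k : ℤ) : ℂ) := by exact_mod_cast congrArg (fun i : ℤ => (i:ℂ)) this
    rw [h2]
    push_cast
    ring
  have hrefl := Complex.Gamma_mul_Gamma_one_sub z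
  have hid : Complex.Gamma z * Complex.Gamma (1 - z) * Complex.sin (π * z) = π := by
    rw [hrefl, div_mul_cancel₀ _ hsin]
  have hnorm : ‖Complex.Gamma z‖ * (‖Complex.Gamma (1 - z)‖ * ‖Complex.sin (π * z)‖) = π := by
    have hh := congrArg norm hid
    simpa [norm_mul, Complex.norm_real, _root_.abs_of_nonneg Real.pi_pos.le,
      Real.norm_eq_abs, mul_assoc] using hh
  have h1z_re : ((1:ℂ) - z).re = 1 - z.re := by simp
  have hg1 : ‖Complex.Gamma (1 - z)‖ ≤ Real.Gamma (1 - z.re) := by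
    have := L1 (1 - z) (by rw [h1z_re]; linarith)
    rwa [h1z_re] at this
  have him' : |((π:ℂ) * z).im| = π * |z.im| := by
    simp [abs_mul, _root_.abs_of_nonneg Real.pi_pos.le]
  have hsinb : ‖Complex.sin (π * z)‖ ≤ Real.exp (π * |z.im|) := by
    have := norm_sin_le' ((π:ℂ) * z)
    rwa [him'] at this
  have hgamma_pos : 0 < Real.Gamma (1 - z.re) := Real.Gamma_pos_of_pos (by linarith)
  have hsinpos : 0 < ‖Complex.sin (π * z)‖ := norm_pos_iff.2 hsin
  have hGpos : 0 < ‖Complex.Gamma (1 - z)‖ := by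
    apply norm_pos_iff.2 (Complex.Gamma_ne_zero_of_re_pos _)
    rw [h1z_re]; linarith
  have key : π * Real.exp (-π * |z.im|) / Real.Gamma (1 - z.re) *
      (‖Complex.Gamma (1 - z)‖ * ‖Complex.sin (π * z)‖) ≤ π := by
    calc π * Real.exp (-π * |z.im|) / Real.Gamma (1 - z.re) *
        (‖Complex.Gamma (1 - z)‖ * ‖Complex.sin (π * z)‖)
        ≤ π * Real.exp (-π * |z.im|) / Real.Gamma (1 - z.re) *
          (Real.Gamma (1 - z.re) * Real.exp (π * |z.im|)) := by
          apply mul_le_mul_of_nonneg_left _ (by positivity)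
          exact mul_le_mul hg1 hsinb hsinpos.le hgamma_pos.le
      _ = π * (Real.exp (-π * |z.im|) * Real.exp (π * |z.im|)) *
          (Real.Gamma (1 - z.re) / Real.Gamma (1 - z.re)) := by ring
      _ = π := by
          rw [← Real.exp_add, div_self hgamma_pos.ne']
          simp
  have key2 : π * Real.exp (-π * |z.im|) / Real.Gamma (1 - z.re) *
      (‖Complex.Gamma (1 - z)‖ * ‖Complex.sin (π * z)‖) ≤
      ‖Complex.Gamma z‖ * (‖Complex.Gamma (1 - z)‖ * ‖Complex.sin (π * z)‖) := by
    rw [hnorm]; exact key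
  exact le_of_mul_le_mul_right key2 (by positivity)

lemma L5 (z : ℂ) (h0 : 0 < z.re) (h1 : z.re ≤ 1) :
    Real.exp (-(π + 2) * |z.im|) / 8 ≤ ‖Complex.Gamma z‖ := by
  have hz : z ≠ 0 := by intro h; rw [h] at h0; simp at h0
  have hz1 : z + 1 ≠ 0 := by
    intro h
    have := congrArg Complex.re h
    simp at this
    linarith
  have hrec : Complex.Gamma (z + 2) = (z + 1) * (z * Complex.Gamma z) := by
    have e1 := Complex.Gamma_add_one z hz
    have e2 := Complex.Gamma_add_one (z + 1) hz1
    rw [show z + 1 + 1 = z + 2 by ring] at e2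
    rw [e2, e1]
  have hre2 : (z + 2).re = z.re + 2 := by simp
  have him2 : (z + 2).im = z.im := by simp
  have hlow : Real.exp (-π * |z.im|) / 4 ≤ ‖Complex.Gamma (z + 2)‖ := by
    have := L3 (z + 2) (by rw [hre2]; linarith)
    rw [hre2, him2] at this
    have hg : (1:ℝ) ≤ Real.Gamma (z.re + 2) := G1 (by linarith) (by linarith)
    nlinarith [Real.exp_pos (-π * |z.im|)]
  have habsz : ‖z‖ ≤ Real.exp |z.im| := by
    calc ‖z‖ ≤ |z.re| + |z.im| := Complex.norm_le_abs_re_add_abs_im z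
      _ ≤ 1 + |z.im| := by
          rw [_root_.abs_of_nonneg h0.le]
          linarith
      _ ≤ Real.exp |z.im| := by
          have := Real.add_one_le_exp |z.im|
          linarith
  have habsz1 : ‖z + 1‖ ≤ 2 * Real.exp |z.im| := by
    have h1e : (1:ℝ) ≤ Real.exp |z.im| := Real.one_le_exp (abs_nonneg _)
    calc ‖z + 1‖ ≤ ‖z‖ + 1 := by
          calc ‖z + 1‖ ≤ ‖z‖ + ‖(1:ℂ)‖ := norm_add_le _ _
            _ = ‖z‖ + 1 := by rw [norm_one]
      _ ≤ Real.exp |z.im| + Real.exp |z.im| := by linarith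
      _ = 2 * Real.exp |z.im| := by ring
  have key : Real.exp (-π * |z.im|) / 4 ≤ 2 * Real.exp |z.im| * (Real.exp |z.im| * ‖Complex.Gamma z‖) := by
    calc Real.exp (-π * |z.im|) / 4 ≤ ‖Complex.Gamma (z + 2)‖ := hlow
      _ = ‖z + 1‖ * (‖z‖ * ‖Complex.Gamma z‖) := by rw [hrec, norm_mul, norm_mul]
      _ ≤ (2 * Real.exp |z.im|) * (Real.exp |z.im| * ‖Complex.Gamma z‖) := by
          apply mul_le_mul habsz1 _ (by positivity) (by positivity)
          exact mul_le_mul_of_nonneg_right habsz (norm_nonneg _)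
  have hepos : (0:ℝ) < Real.exp |z.im| := Real.exp_pos _
  have hprod : Real.exp (-(π + 2) * |z.im|) / 8 * (Real.exp |z.im| * Real.exp |z.im|)
      = Real.exp (-π * |z.im|) / 8 := by
    rw [show -(π + 2) * |z.im| = -π * |z.im| + (-|z.im|) + (-|z.im|) by ring,
      Real.exp_add, Real.exp_add, Real.exp_neg]
    field_simp
  have key2 : Real.exp (-(π + 2) * |z.im|) / 8 * (Real.exp |z.im| * Real.exp |z.im|)
      ≤ ‖Complex.Gamma z‖ * (Real.exp |z.im| * Real.exp |z.im|) := by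
    rw [hprod]
    nlinarith [key]
  exact le_of_mul_le_mul_right key2 (by positivity)

noncomputable def Ff (a d : ℝ) (n : ℕ) : ℝ :=
  if 0 < a then Real.Gamma (a * n + d)
  else if a < 0 then (Real.Gamma (1 - (a * n + d)))⁻¹
  else 1

lemma tendsto_lin {a : ℝ} (ha : 0 < a) (d : ℝ) :
    Tendsto (fun n : ℕ => a * (n:ℝ) + d) atTop atTop := by
  apply tendsto_atTop_add_const_right
  exact (tendsto_natCast_atTop_atTop).const_mul_atTop ha

lemma Ff_pos (a d : ℝ) : ∀ᶠ n : ℕ in atTop, 0 < Ff a d n := by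
  rcases lt_trichotomy a 0 with h | h | h
  · have hev := (tendsto_lin (show 0 < -a by linarith) (1 - d)).eventually_ge_atTop 1
    filter_upwards [hev] with n hn
    rw [Ff, if_neg (by linarith), if_pos h]
    have : 1 - (a * n + d) = -a * n + (1 - d) := by ring
    rw [this]
    exact inv_pos.2 (Real.Gamma_pos_of_pos (by linarith))
  · filter_upwards with n
    rw [Ff, h]
    simp
  · have hev := (tendsto_lin h d).eventually_ge_atTop 1
    filter_upwards [hev] with n hn
    rw [Ff, if_pos h]
    exact Real.Gamma_pos_of_pos (by linarith)

lemma Ff_step (a d : ℝ) : ∃ M : ℝ, 0 < M ∧ ∀ᶠ n : ℕ in atTop,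
    Ff a d n * (M * ((n:ℝ)+1)) ^ a ≤ Ff a d (n+1) := by
  rcases lt_trichotomy a 0 with h | h | h
  · -- negative case
    refine ⟨(-a) + |1 - d - a| + 1, by have := abs_nonneg (1 - d - a); linarith, ?_⟩
    have hev := (tendsto_lin (show 0 < -a by linarith) (1 - d)).eventually_ge_atTop 1
    filter_upwards [hev] with n hn
    set M := (-a) + |1 - d - a| + 1 with hM
    have hM0 : (0:ℝ) < M := by have := abs_nonneg (1 - d - a); rw [hM]; linarith
    set u := -a * (n:ℝ) + (1 - d) with hu
    have hu1 : 1 ≤ u := hn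
    have hs : (0:ℝ) ≤ -a := by linarith
    have hup : Real.Gamma (u + (-a)) ≤ Real.Gamma u * (u + (-a)) ^ (-a) :=
      gammaUB (by linarith) hs
    have hub : u + (-a) ≤ M * ((n:ℝ)+1) := by
      rw [hu, hM]
      have h1 : -a * (n:ℝ) ≤ ((-a) + |1 - d - a| + 1) * n := by
        apply mul_le_mul_of_nonneg_right _ (Nat.cast_nonneg n)
        have := abs_nonneg (1 - d - a)
        linarith
      have h2 : 1 - d - a ≤ |1 - d - a| := le_abs_self _
      nlinarith [Nat.cast_nonneg (α := ℝ) n]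
    have hup2 : Real.Gamma (u + (-a)) ≤ Real.Gamma u * (M * ((n:ℝ)+1)) ^ (-a) := by
      calc Real.Gamma (u + (-a)) ≤ Real.Gamma u * (u + (-a)) ^ (-a) := hup
        _ ≤ Real.Gamma u * (M * ((n:ℝ)+1)) ^ (-a) := by
            apply mul_le_mul_of_nonneg_left _ (Real.Gamma_pos_of_pos (by linarith)).le
            exact Real.rpow_le_rpow (by linarith) hub hs
    have hFn : Ff a d n = (Real.Gamma u)⁻¹ := by
      rw [Ff, if_neg (by linarith), if_pos h]
      congr 1
      rw [hu]; ring_nf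
    have hFn1 : Ff a d (n+1) = (Real.Gamma (u + (-a)))⁻¹ := by
      rw [Ff, if_neg (by linarith), if_pos h]
      congr 1
      rw [hu]; push_cast; ring
    rw [hFn, hFn1]
    have hgu : 0 < Real.Gamma u := Real.Gamma_pos_of_pos (by linarith)
    have hgu2 : 0 < Real.Gamma (u + (-a)) := Real.Gamma_pos_of_pos (by nlinarith)
    have hrpow : (M * ((n:ℝ)+1)) ^ a = ((M * ((n:ℝ)+1)) ^ (-a))⁻¹ := by
      rw [← Real.rpow_neg (by positivity), neg_neg]
    rw [hrpow, ← mul_inv]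
    exact inv_anti₀ hgu2 hup2
  · -- zero case
    refine ⟨1, one_pos, ?_⟩
    filter_upwards with n
    rw [Ff, Ff, h]
    simp
  · -- positive case
    refine ⟨a/2, by positivity, ?_⟩
    have hev1 := (tendsto_lin h d).eventually_ge_atTop 2
    have hev2 := (tendsto_lin (show 0 < a/2 by positivity) (d - 1 - a/2)).eventually_ge_atTop 0
    filter_upwards [hev1, hev2] with n hn1 hn2
    set u := a * (n:ℝ) + d with hu
    have hFn : Ff a d n = Real.Gamma u := by rw [Ff, if_pos h]
    have hFn1 : Ff a d (n+1) = Real.Gamma (u + a) := by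
      rw [Ff, if_pos h]
      congr 1
      rw [hu]; push_cast; ring
    rw [hFn, hFn1]
    have hlb : Real.Gamma u * (u - 1) ^ a ≤ Real.Gamma (u + a) := gammaLB (by linarith) h.le
    have hbase : a/2 * ((n:ℝ)+1) ≤ u - 1 := by
      rw [hu]
      nlinarith [hn2]
    calc Real.Gamma u * (a/2 * ((n:ℝ)+1)) ^ a
        ≤ Real.Gamma u * (u - 1) ^ a := by
          apply mul_le_mul_of_nonneg_left _ (Real.Gamma_pos_of_pos (by linarith)).le
          exact Real.rpow_le_rpow (by positivity) hbase h.le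
      _ ≤ Real.Gamma (u + a) := hlb

lemma exp_aux (cst t e : ℝ) (hc : 0 ≤ cst) (n : ℕ) :
    Real.exp (-cst * |e|) * (Real.exp (-cst * |t|))^n ≤ Real.exp (-cst * |t * n + e|) := by
  rw [← Real.exp_nat_mul, ← Real.exp_add]
  apply Real.exp_le_exp.2
  have h1 : |t * n + e| ≤ |t| * n + |e| := by
    calc |t * n + e| ≤ |t * n| + |e| := abs_add_le _ _
      _ = |t| * n + |e| := by rw [abs_mul, Nat.abs_cast]
  nlinarith [abs_nonneg e, abs_nonneg t, Nat.cast_nonneg (α := ℝ) n]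

lemma FB (A D : ℂ) : ∃ K : ℝ, 0 < K ∧ ∃ Q : ℝ, 0 < Q ∧ ∀ᶠ n : ℕ in atTop,
    Complex.Gamma (A * n + D) = 0 ∨
      K * Q ^ n * Ff A.re D.re n ≤ ‖Complex.Gamma (A * n + D)‖ := by
  set a := A.re with ha'; set d := D.re with hd'; set t := A.im; set e := D.im
  have hre : ∀ n : ℕ, (A * n + D).re = a * n + d := by intro n; simp; rfl
  have him : ∀ n : ℕ, (A * n + D).im = t * n + e := by intro n; simp; rfl
  rcases lt_trichotomy a 0 with h | h | h
  · -- negative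
    refine ⟨π * Real.exp (-π * |e|), by positivity, Real.exp (-π * |t|), Real.exp_pos _, ?_⟩
    have hev := (tendsto_lin (show 0 < -a by linarith) (-d)).eventually_ge_atTop 0
    filter_upwards [hev] with n hn
    by_cases hG : Complex.Gamma (A * n + D) = 0
    · exact Or.inl hG
    right
    have hre_le : (A * n + D).re ≤ 0 := by rw [hre]; linarith
    have hL4 := L4 _ hre_le hG
    rw [hre, him] at hL4
    have hFf : Ff a d n = (Real.Gamma (1 - (a * n + d)))⁻¹ := by
      rw [Ff, if_neg (by linarith), if_pos h]
    have hgpos : 0 < Real.Gamma (1 - (a * n + d)) := Real.Gamma_pos_of_pos (by linarith)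
    have hexp := exp_aux π t e Real.pi_pos.le n
    calc π * Real.exp (-π * |e|) * Real.exp (-π * |t|) ^ n * Ff a d n
        = π * (Real.Gamma (1 - (a * n + d)))⁻¹ *
            (Real.exp (-π * |e|) * Real.exp (-π * |t|) ^ n) := by rw [hFf]; ring
      _ ≤ π * (Real.Gamma (1 - (a * n + d)))⁻¹ * Real.exp (-π * |t * n + e|) := by
          apply mul_le_mul_of_nonneg_left hexp (by positivity)
      _ = π * Real.exp (-π * |t * n + e|) / Real.Gamma (1 - (a * n + d)) := by
          rw [div_eq_mul_inv]; ring
      _ ≤ ‖Complex.Gamma (A * n + D)‖ := hL4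
  · -- a = 0
    have hFf : ∀ n, Ff a d n = 1 := by
      intro n
      rw [Ff, if_neg (by rw [← h]; exact lt_irrefl a), if_neg (by rw [← h]; exact lt_irrefl a)]
    rcases le_or_gt d 0 with hd | hd
    · -- d ≤ 0
      have hgpos : 0 < Real.Gamma (1 - d) := Real.Gamma_pos_of_pos (by linarith)
      refine ⟨π * Real.exp (-π * |e|) * (Real.Gamma (1 - d))⁻¹, by positivity,
        Real.exp (-π * |t|), Real.exp_pos _, ?_⟩
      filter_upwards with n
      by_cases hG : Complex.Gamma (A * n + D) = 0
      · exact Or.inl hG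
      right
      have hre_le : (A * n + D).re ≤ 0 := by rw [hre, h]; simpa using hd
      have hL4 := L4 _ hre_le hG
      rw [hre, him, h, zero_mul, zero_add] at hL4
      have hexp := exp_aux π t e Real.pi_pos.le n
      calc π * Real.exp (-π * |e|) * (Real.Gamma (1 - d))⁻¹ * Real.exp (-π * |t|) ^ n * Ff a d n
          = π * (Real.Gamma (1 - d))⁻¹ *
              (Real.exp (-π * |e|) * Real.exp (-π * |t|) ^ n) := by rw [hFf]; ring
        _ ≤ π * (Real.Gamma (1 - d))⁻¹ * Real.exp (-π * |t * n + e|) := by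
            apply mul_le_mul_of_nonneg_left hexp (by positivity)
        _ = π * Real.exp (-π * |t * n + e|) / Real.Gamma (1 - d) := by
            rw [div_eq_mul_inv]; ring
        _ ≤ ‖Complex.Gamma (A * n + D)‖ := hL4
    · rcases le_or_gt 1 d with hd1 | hd1
      · -- d ≥ 1 : L3
        have hgpos : 0 < Real.Gamma d := Real.Gamma_pos_of_pos (by linarith)
        refine ⟨Real.exp (-π * |e|) / 4 * Real.Gamma d, by positivity,
          Real.exp (-π * |t|), Real.exp_pos _, ?_⟩
        filter_upwards with n
        right
        have hre_ge : 1 ≤ (A * n + D).re := by rw [hre, h]; simpa using hd1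
        have hL3 := L3 _ hre_ge
        rw [hre, him, h, zero_mul, zero_add] at hL3
        have hexp := exp_aux π t e Real.pi_pos.le n
        calc Real.exp (-π * |e|) / 4 * Real.Gamma d * Real.exp (-π * |t|) ^ n * Ff a d n
            = Real.Gamma d / 4 * (Real.exp (-π * |e|) * Real.exp (-π * |t|) ^ n) := by
              rw [hFf]; ring
          _ ≤ Real.Gamma d / 4 * Real.exp (-π * |t * n + e|) := by
              apply mul_le_mul_of_nonneg_left hexp (by positivity)
          _ = Real.exp (-π * |t * n + e|) / 4 * Real.Gamma d := by ring
          _ ≤ ‖Complex.Gamma (A * n + D)‖ := hL3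
      · -- 0 < d < 1 : L5
        refine ⟨Real.exp (-(π + 2) * |e|) / 8, by positivity,
          Real.exp (-(π + 2) * |t|), Real.exp_pos _, ?_⟩
        filter_upwards with n
        right
        have hre0 : 0 < (A * n + D).re := by rw [hre, h]; simpa using hd
        have hre1 : (A * n + D).re ≤ 1 := by rw [hre, h]; simp; linarith
        have hL5 := L5 _ hre0 hre1
        rw [him] at hL5
        have hexp := exp_aux (π + 2) t e (by positivity) n
        calc Real.exp (-(π + 2) * |e|) / 8 * Real.exp (-(π + 2) * |t|) ^ n * Ff a d n
            = 1/8 * (Real.exp (-(π + 2) * |e|) * Real.exp (-(π + 2) * |t|) ^ n) := by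
              rw [hFf]; ring
          _ ≤ 1/8 * Real.exp (-(π + 2) * |t * n + e|) := by
              apply mul_le_mul_of_nonneg_left hexp (by positivity)
          _ = Real.exp (-(π + 2) * |t * n + e|) / 8 := by ring
          _ ≤ ‖Complex.Gamma (A * n + D)‖ := hL5
  · -- positive
    refine ⟨Real.exp (-π * |e|) / 4, by positivity, Real.exp (-π * |t|), Real.exp_pos _, ?_⟩
    have hev := (tendsto_lin h d).eventually_ge_atTop 1
    filter_upwards [hev] with n hn
    right
    have hre_ge : 1 ≤ (A * n + D).re := by rw [hre]; exact hn
    have hL3 := L3 _ hre_ge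
    rw [hre, him] at hL3
    have hFf : Ff a d n = Real.Gamma (a * n + d) := by rw [Ff, if_pos h]
    have hgpos : 0 < Real.Gamma (a * n + d) := Real.Gamma_pos_of_pos (by linarith)
    have hexp := exp_aux π t e Real.pi_pos.le n
    calc Real.exp (-π * |e|) / 4 * Real.exp (-π * |t|) ^ n * Ff a d n
        = Real.Gamma (a * n + d) / 4 * (Real.exp (-π * |e|) * Real.exp (-π * |t|) ^ n) := by
          rw [hFf]; ring
      _ ≤ Real.Gamma (a * n + d) / 4 * Real.exp (-π * |t * n + e|) := by
          apply mul_le_mul_of_nonneg_left hexp (by positivity)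
      _ = Real.exp (-π * |t * n + e|) / 4 * Real.Gamma (a * n + d) := by ring
      _ ≤ ‖Complex.Gamma (A * n + D)‖ := hL3

set_option maxHeartbeats 1000000 in

theorem stmt13 (m : ℕ) (α β : Fin m → ℂ) (γ b c : ℂ) (κ : ℝ) (hκ : 0 < κ)
    (hα : max 0 (κ - 1) < ∑ j, (α j).re) (hβ : ∀ j, 0 < (β j).re) (hγ : 0 < γ.re)
    (z : ℂ) :
    Summable (fun n : ℕ =>
      ‖c ^ n * (Complex.Gamma (γ + (κ * n : ℝ)) / Complex.Gamma γ) * z ^ n /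
        ((∏ j, Complex.Gamma (α j * n + β j + (b + 1) / 2)) * (n.factorial : ℂ))‖) := by
  classical
  set p := γ.re with hp'
  have hp : 0 < p := hγ
  set D : Fin m → ℂ := fun j => β j + (b + 1) / 2 with hD'
  set S := ∑ j, (α j).re with hS'
  have hS1 : κ - 1 < S := lt_of_le_of_lt (le_max_right _ _) hα
  -- rewrite the Gamma arguments
  have hprodeq : ∀ n : ℕ, (∏ j, Complex.Gamma (α j * n + β j + (b + 1) / 2))
      = ∏ j, Complex.Gamma (α j * n + D j) := by
    intro n
    refine Finset.prod_congr rfl fun j _ => ?_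
    congr 1
    rw [hD']
    ring
  -- choose per-factor constants
  choose K hK Q hQ hFB using fun j => FB (α j) (D j)
  choose M hM hMstep using fun j => Ff_step (α j).re (D j).re
  set F : Fin m → ℕ → ℝ := fun j n => Ff (α j).re (D j).re n with hF'
  set PK := ∏ j, K j with hPK'
  set PQ := ∏ j, Q j with hPQ'
  have hPK : 0 < PK := Finset.prod_pos fun j _ => hK j
  have hPQ : 0 < PQ := Finset.prod_pos fun j _ => hQ j
  set GG := ‖Complex.Gamma γ‖ with hGG'
  have hGG : 0 < GG := norm_pos_iff.2 (Complex.Gamma_ne_zero_of_re_pos hγ)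
  set E := ‖c‖ * ‖z‖ / PQ with hE'
  have hE : 0 ≤ E := by positivity
  set Mp := κ + |p| + 1 with hMp'
  have hMp : 0 < Mp := by positivity
  set bfun : ℕ → ℝ := fun n =>
    (GG * PK)⁻¹ * E ^ n * Real.Gamma (p + κ * n) / ((∏ j, F j n) * n.factorial) with hbfun'
  set CR := E * Mp ^ κ / ∏ j, (M j) ^ ((α j).re) with hCR'
  -- R n closed form facts
  have hRform : ∀ n : ℕ,
      E * (Mp * ((n:ℝ)+1)) ^ κ / ((∏ j, (M j * ((n:ℝ)+1)) ^ ((α j).re)) * ((n:ℝ)+1))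
      = CR * ((n:ℝ)+1) ^ (κ - S - 1) := by
    intro n
    have hn1 : (0:ℝ) < (n:ℝ) + 1 := by positivity
    have h1 : (Mp * ((n:ℝ)+1)) ^ κ = Mp ^ κ * ((n:ℝ)+1) ^ κ :=
      Real.mul_rpow hMp.le hn1.le
    have h2 : (∏ j, (M j * ((n:ℝ)+1)) ^ ((α j).re))
        = (∏ j, (M j) ^ ((α j).re)) * ((n:ℝ)+1) ^ S := by
      rw [hS', Real.rpow_sum_of_pos hn1, ← Finset.prod_mul_distrib]
      refine Finset.prod_congr rfl fun j _ => ?_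
      rw [Real.mul_rpow (hM j).le hn1.le]
    have h3 : ((n:ℝ)+1) ^ (κ - S - 1)
        = ((n:ℝ)+1) ^ κ / (((n:ℝ)+1) ^ S * ((n:ℝ)+1)) := by
      rw [show κ - S - 1 = κ - (S + 1) by ring, Real.rpow_sub hn1, Real.rpow_add hn1,
        Real.rpow_one]
    rw [h1, h2, h3, hCR']
    have hPM : (0:ℝ) < ∏ j, (M j) ^ ((α j).re) :=
      Finset.prod_pos fun j _ => Real.rpow_pos_of_pos (hM j) _
    field_simp
  -- tendsto of R to 0
  have hRtend : Tendsto (fun n : ℕ => CR * ((n:ℝ)+1) ^ (κ - S - 1)) atTop (nhds 0) := by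
    have hδ : 0 < S + 1 - κ := by linarith
    have ht1 : Tendsto (fun n : ℕ => ((n:ℝ)+1)) atTop atTop :=
      tendsto_atTop_add_const_right _ _ tendsto_natCast_atTop_atTop
    have ht2 : Tendsto (fun x : ℝ => x ^ (-(S + 1 - κ))) atTop (nhds 0) :=
      tendsto_rpow_neg_atTop hδ
    have ht3 : Tendsto (fun n : ℕ => ((n:ℝ)+1) ^ (κ - S - 1)) atTop (nhds 0) := by
      have : (fun n : ℕ => ((n:ℝ)+1) ^ (κ - S - 1))
          = (fun x : ℝ => x ^ (-(S + 1 - κ))) ∘ (fun n : ℕ => ((n:ℝ)+1)) := by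
        funext n
        simp only [Function.comp_apply]
        congr 1
        ring
      rw [this]
      exact ht2.comp ht1
    simpa using ht3.const_mul CR
  have hRhalf : ∀ᶠ n : ℕ in atTop, CR * ((n:ℝ)+1) ^ (κ - S - 1) < 1/2 :=
    hRtend.eventually (gt_mem_nhds (by norm_num))
  -- eventual facts
  have hev1 : ∀ᶠ n : ℕ in atTop, ∀ j, Complex.Gamma (α j * n + D j) = 0 ∨
      K j * Q j ^ n * F j n ≤ ‖Complex.Gamma (α j * n + D j)‖ :=
    eventually_all.2 fun j => hFB j
  have hev2 : ∀ᶠ n : ℕ in atTop, ∀ j, 0 < F j n :=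
    eventually_all.2 fun j => Ff_pos _ _
  have hev2' : ∀ᶠ n : ℕ in atTop, ∀ j, 0 < F j (n+1) :=
    (tendsto_add_atTop_nat 1).eventually hev2
  have hev3 : ∀ᶠ n : ℕ in atTop, ∀ j, F j n * (M j * ((n:ℝ)+1)) ^ ((α j).re) ≤ F j (n+1) :=
    eventually_all.2 fun j => hMstep j
  -- part 1 : comparison ‖term n‖ ≤ bfun n eventually
  have hcomp : ∀ᶠ n : ℕ in atTop,
      ‖c ^ n * (Complex.Gamma (γ + (κ * n : ℝ)) / Complex.Gamma γ) * z ^ n /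
        ((∏ j, Complex.Gamma (α j * n + β j + (b + 1) / 2)) * (n.factorial : ℂ))‖ ≤ bfun n := by
    filter_upwards [hev1, hev2] with n h1 h2
    have hfac : (0:ℝ) < (n.factorial : ℝ) := by positivity
    have hFn : (0:ℝ) < ∏ j, F j n := Finset.prod_pos fun j _ => h2 j
    have hGa : 0 < Real.Gamma (p + κ * n) :=
      Real.Gamma_pos_of_pos (by positivity)
    have hbnonneg : 0 ≤ bfun n := by
      have hbeq : bfun n = (GG * PK)⁻¹ * E ^ n * Real.Gamma (p + κ * n) /
          ((∏ j, F j n) * (n.factorial : ℝ)) := rfl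
      rw [hbeq]
      positivity
    have hnorm : ‖c ^ n * (Complex.Gamma (γ + (κ * n : ℝ)) / Complex.Gamma γ) * z ^ n /
        ((∏ j, Complex.Gamma (α j * n + β j + (b + 1) / 2)) * (n.factorial : ℂ))‖
        = (‖c‖ ^ n * ‖Complex.Gamma (γ + ((κ * n : ℝ) : ℂ))‖ * ‖z‖ ^ n) /
          (GG * ((∏ j, ‖Complex.Gamma (α j * n + D j)‖) * (n.factorial : ℝ))) := by
      rw [hprodeq n]
      rw [norm_div, norm_mul, norm_mul, norm_div, norm_pow, norm_pow, norm_mul,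
        norm_prod, Complex.norm_natCast, hGG']
      ring
    rw [hnorm]
    by_cases hzero : ∃ j, Complex.Gamma (α j * n + D j) = 0
    · obtain ⟨j0, hj0⟩ := hzero
      have : (∏ j, ‖Complex.Gamma (α j * n + D j)‖) = 0 := by
        apply Finset.prod_eq_zero (Finset.mem_univ j0)
        rw [hj0, norm_zero]
      rw [this]
      simpa using hbnonneg
    · push_neg at hzero
      have hjb : ∀ j, K j * Q j ^ n * F j n ≤ ‖Complex.Gamma (α j * n + D j)‖ :=
        fun j => (h1 j).resolve_left (hzero j)
      have hre : (γ + ((κ * n : ℝ) : ℂ)).re = p + κ * n := by simp [hp']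
      have hnum : ‖c‖ ^ n * ‖Complex.Gamma (γ + ((κ * n : ℝ) : ℂ))‖ * ‖z‖ ^ n
          ≤ ‖c‖ ^ n * Real.Gamma (p + κ * n) * ‖z‖ ^ n := by
        have := L1 (γ + ((κ * n : ℝ) : ℂ)) (by rw [hre]; positivity)
        rw [hre] at this
        gcongr
      have hden : GG * ((PK * PQ ^ n * ∏ j, F j n) * (n.factorial : ℝ))
          ≤ GG * ((∏ j, ‖Complex.Gamma (α j * n + D j)‖) * (n.factorial : ℝ)) := by
        have hinner : PK * PQ ^ n * ∏ j, F j n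
            = ∏ j, (K j * Q j ^ n * F j n) := by
          rw [hPK', hPQ', ← Finset.prod_pow, ← Finset.prod_mul_distrib,
            ← Finset.prod_mul_distrib]
        rw [hinner]
        have : ∏ j, (K j * Q j ^ n * F j n) ≤ ∏ j, ‖Complex.Gamma (α j * n + D j)‖ := by
          apply Finset.prod_le_prod
          · intro j _
            have := hK j; have := pow_pos (hQ j) n; have := h2 j
            positivity
          · intro j _
            exact hjb j
        gcongr
      have hdenpos : (0:ℝ) < GG * ((PK * PQ ^ n * ∏ j, F j n) * (n.factorial : ℝ)) := by
        positivity
      have hstep := div_le_div₀ (by positivity) hnum hdenpos hden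
      refine le_trans hstep (le_of_eq ?_)
      have hEn : E ^ n = ‖c‖ ^ n * ‖z‖ ^ n / PQ ^ n := by
        rw [hE', div_pow, mul_pow]
      have hbn : bfun n = (GG * PK)⁻¹ * E ^ n * Real.Gamma (p + κ * n) /
          ((∏ j, F j n) * (n.factorial : ℝ)) := rfl
      rw [hbn, hEn]
      have hPQn : (0:ℝ) < PQ ^ n := by positivity
      field_simp
  -- part 2 : ratio bound eventually
  have hratio : ∀ᶠ n : ℕ in atTop, bfun (n+1) ≤ (1/2) * bfun n := by
    filter_upwards [hev2, hev2', hev3, hRhalf] with n h2 h2' h3 hRn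
    have hn1 : (0:ℝ) < (n:ℝ) + 1 := by positivity
    have hfac : (0:ℝ) < (n.factorial : ℝ) := by positivity
    have hFn : (0:ℝ) < ∏ j, F j n := Finset.prod_pos fun j _ => h2 j
    have hFn1 : (0:ℝ) < ∏ j, F j (n+1) := Finset.prod_pos fun j _ => h2' j
    have hGa : 0 < Real.Gamma (p + κ * n) := Real.Gamma_pos_of_pos (by positivity)
    have hGns : (0:ℝ) < ∏ j, (M j * ((n:ℝ)+1)) ^ ((α j).re) :=
      Finset.prod_pos fun j _ => Real.rpow_pos_of_pos (mul_pos (hM j) hn1) _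
    have hbnonneg : 0 ≤ bfun n := by
      have hbeq : bfun n = (GG * PK)⁻¹ * E ^ n * Real.Gamma (p + κ * n) /
          ((∏ j, F j n) * (n.factorial : ℝ)) := rfl
      rw [hbeq]
      positivity
    -- numerator step
    have hGstep : Real.Gamma (p + κ * ((n:ℕ)+1 : ℕ)) ≤
        Real.Gamma (p + κ * n) * (Mp * ((n:ℝ)+1)) ^ κ := by
      have harg : p + κ * (((n:ℕ)+1 : ℕ) : ℝ) = (p + κ * n) + κ := by push_cast; ring
      rw [harg]
      calc Real.Gamma ((p + κ * n) + κ)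
          ≤ Real.Gamma (p + κ * n) * ((p + κ * n) + κ) ^ κ :=
            gammaUB (by positivity) hκ.le
        _ ≤ Real.Gamma (p + κ * n) * (Mp * ((n:ℝ)+1)) ^ κ := by
            apply mul_le_mul_of_nonneg_left _ hGa.le
            apply Real.rpow_le_rpow (by positivity) _ hκ.le
            rw [hMp']
            have hpabs : p ≤ |p| := le_abs_self p
            have hnn : (0:ℝ) ≤ (n:ℝ) := Nat.cast_nonneg n
            nlinarith [abs_nonneg p]
    -- denominator step
    have hdstep : ((∏ j, F j n) * (∏ j, (M j * ((n:ℝ)+1)) ^ ((α j).re))) * (((n:ℝ)+1) * (n.factorial : ℝ))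
        ≤ (∏ j, F j (n+1)) * ((n+1).factorial : ℝ) := by
      have hfs : ((n+1).factorial : ℝ) = ((n:ℝ)+1) * (n.factorial : ℝ) := by
        rw [Nat.factorial_succ]; push_cast; ring
      rw [hfs]
      apply mul_le_mul_of_nonneg_right _ (by positivity)
      rw [← Finset.prod_mul_distrib]
      apply Finset.prod_le_prod
      · intro j _
        have := (h2 j).le
        have h4 : (0:ℝ) ≤ (M j * ((n:ℝ)+1)) ^ ((α j).re) :=
          (Real.rpow_pos_of_pos (mul_pos (hM j) hn1) _).le
        exact mul_nonneg (h2 j).le h4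
      · intro j _
        exact h3 j
    have hkey : bfun (n+1) ≤ bfun n * (CR * ((n:ℝ)+1) ^ (κ - S - 1)) := by
      rw [← hRform n]
      have e1 : (GG * PK)⁻¹ * E ^ (n+1) * Real.Gamma (p + κ * (((n:ℕ)+1:ℕ) : ℝ))
          ≤ (GG * PK)⁻¹ * E ^ (n+1) * (Real.Gamma (p + κ * n) * (Mp * ((n:ℝ)+1)) ^ κ) :=
        mul_le_mul_of_nonneg_left hGstep (by positivity)
      have hd1 : (0:ℝ) < ((∏ j, F j n) * (∏ j, (M j * ((n:ℝ)+1)) ^ ((α j).re))) * (((n:ℝ)+1) * (n.factorial : ℝ)) := by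
        positivity
      have e2 := div_le_div₀ (by positivity) e1 hd1 hdstep
      have hb1 : bfun (n+1) = (GG * PK)⁻¹ * E ^ (n+1) * Real.Gamma (p + κ * (((n:ℕ)+1:ℕ) : ℝ)) /
          ((∏ j, F j (n+1)) * ((n+1).factorial : ℝ)) := rfl
      have hbn : bfun n = (GG * PK)⁻¹ * E ^ n * Real.Gamma (p + κ * n) /
          ((∏ j, F j n) * (n.factorial : ℝ)) := rfl
      rw [hb1, hbn]
      refine le_trans e2 (le_of_eq ?_)
      have hXpos : (0:ℝ) < (Mp * ((n:ℝ)+1)) ^ κ := Real.rpow_pos_of_pos (by positivity) _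
      field_simp
      ring
    calc bfun (n+1) ≤ bfun n * (CR * ((n:ℝ)+1) ^ (κ - S - 1)) := hkey
      _ ≤ bfun n * (1/2) := by
          apply mul_le_mul_of_nonneg_left hRn.le hbnonneg
      _ = (1/2) * bfun n := by ring
  -- part 3 : summability of bfun
  have hbnn : ∀ᶠ n : ℕ in atTop, 0 ≤ bfun n := by
    filter_upwards [hev2] with n h2
    have hFn : (0:ℝ) < ∏ j, F j n := Finset.prod_pos fun j _ => h2 j
    have hGa : 0 < Real.Gamma (p + κ * n) := Real.Gamma_pos_of_pos (by positivity)
    have hbeq : bfun n = (GG * PK)⁻¹ * E ^ n * Real.Gamma (p + κ * n) /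
        ((∏ j, F j n) * (n.factorial : ℝ)) := rfl
    rw [hbeq]
    positivity
  have hbnn' : ∀ᶠ n : ℕ in atTop, 0 ≤ bfun (n+1) :=
    (tendsto_add_atTop_nat 1).eventually hbnn
  have hsumb : Summable bfun := by
    apply summable_of_ratio_norm_eventually_le (show (1/2 : ℝ) < 1 by norm_num)
    filter_upwards [hratio, hbnn, hbnn'] with n hr hb hb'
    rw [Real.norm_of_nonneg hb', Real.norm_of_nonneg hb]
    exact hr
  -- conclude by comparison
  obtain ⟨N, hN⟩ := eventually_atTop.1 hcomp
  rw [← summable_nat_add_iff N]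
  apply Summable.of_nonneg_of_le (fun n => norm_nonneg _)
    (fun n => hN (n + N) (Nat.le_add_left N n))
  exact (summable_nat_add_iff N).2 hsumb
end
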